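/- Let a > 0 and set s = √(2√33 + 6), r₊ = (a/3)(6 − √33)·s, r₋ = −(a/3)·s. Then the pair (r₊, r₋) satisfies the algebraic breaking equation ((2a + r₊)/(2a + r₋))^{3/2}·(8a + 5r₋ − r₊) = ((2a − r₊)/(2a − r₋))^{3/2}·(8a − 5r₋ + r₊), with both quantities 2a ± r₊ and 2a ± r₋ positive. -/
import Mathlib

lemma stmt17_aux (a s t : ℝ) (ha : 0 < a) (ht2 : t ^ 2 = 33) (ht0 : 0 ≤ t)
    (hs2 : s ^ 2 = 2 * t + 6) (hs0 : 0 ≤ s) :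
    0 < 2 * a + (a / 3) * (6 - t) * s ∧ 0 < 2 * a - (a / 3) * (6 - t) * s ∧
    0 < 2 * a + (-(a / 3) * s) ∧ 0 < 2 * a - (-(a / 3) * s) ∧
    ((2 * a + (a / 3) * (6 - t) * s) / (2 * a + (-(a / 3) * s))) ^ ((3 : ℝ) / 2)
        * (8 * a + 5 * (-(a / 3) * s) - (a / 3) * (6 - t) * s)
      = ((2 * a - (a / 3) * (6 - t) * s) / (2 * a - (-(a / 3) * s))) ^ ((3 : ℝ) / 2)
        * (8 * a - 5 * (-(a / 3) * s) + (a / 3) * (6 - t) * s) := by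
  have ht5 : 5 < t := by nlinarith
  have ht6 : t < 6 := by nlinarith
  have hsp : 0 < s := by nlinarith
  have hs5 : s < 5 := by nlinarith
  have h6 : (6 - t) * s < 6 := by nlinarith [mul_nonneg (by linarith : (0:ℝ) ≤ t - 5) hs0]
  have h1 : 0 < 2 * a + (a / 3) * (6 - t) * s := by
    nlinarith [mul_nonneg (mul_nonneg (by linarith : (0:ℝ) ≤ a / 3) (by linarith : (0:ℝ) ≤ 6 - t)) hs0]
  have h2 : 0 < 2 * a - (a / 3) * (6 - t) * s := by
    nlinarith [mul_pos ha (by linarith : (0:ℝ) < 6 - (6 - t) * s)]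
  have h3 : 0 < 2 * a + (-(a / 3) * s) := by nlinarith
  have h4 : 0 < 2 * a - (-(a / 3) * s) := by nlinarith
  refine ⟨h1, h2, h3, h4, ?_⟩
  have hA : 0 ≤ 8 * a + 5 * (-(a / 3) * s) - (a / 3) * (6 - t) * s := by
    nlinarith [mul_pos ha (by nlinarith : (0:ℝ) < 24 - (11 - t) * s)]
  have hB : 0 ≤ 8 * a - 5 * (-(a / 3) * s) + (a / 3) * (6 - t) * s := by
    nlinarith [mul_nonneg (mul_nonneg (by linarith : (0:ℝ) ≤ a / 3) (by linarith : (0:ℝ) ≤ 6 - t)) hs0,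
      mul_nonneg ha.le hs0]
  have hX : 0 ≤ (2 * a + (a / 3) * (6 - t) * s) / (2 * a + (-(a / 3) * s)) :=
    le_of_lt (div_pos h1 h3)
  have hY : 0 ≤ (2 * a - (a / 3) * (6 - t) * s) / (2 * a - (-(a / 3) * s)) :=
    le_of_lt (div_pos h2 h4)
  have e1 : ∀ x : ℝ, 0 ≤ x → x ^ ((3 : ℝ) / 2) = Real.sqrt (x ^ 3) := by
    intro x hx
    rw [show ((3 : ℝ) / 2) = ((3 : ℕ) : ℝ) * (1 / 2 : ℝ) by push_cast; ring,
      Real.rpow_mul hx, Real.rpow_natCast, Real.sqrt_eq_rpow]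
  rw [e1 _ hX, e1 _ hY, ← Real.sqrt_sq hA, ← Real.sqrt_sq hB,
    ← Real.sqrt_mul (by positivity), ← Real.sqrt_mul (by positivity)]
  congr 1
  have hkey : (2 * a + (a / 3) * (6 - t) * s) ^ 3 * (8 * a + 5 * (-(a / 3) * s) - (a / 3) * (6 - t) * s) ^ 2
        * (2 * a - (-(a / 3) * s)) ^ 3
      = (2 * a - (a / 3) * (6 - t) * s) ^ 3 * (8 * a - 5 * (-(a / 3) * s) + (a / 3) * (6 - t) * s) ^ 2
        * (2 * a + (-(a / 3) * s)) ^ 3 := by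
    linear_combination
      ((-182560/81 : ℝ)*a^8*s + (397184/243 : ℝ)*a^8*s*t + (-172688/243 : ℝ)*a^8*s*t^2 + (29200/243 : ℝ)*a^8*s*t^3 + (640/81 : ℝ)*a^8*s*t^4 + (-10976/2187 : ℝ)*a^8*s*t^5 + (1264/2187 : ℝ)*a^8*s*t^6 + (-16/729 : ℝ)*a^8*s*t^7 + (144784/243 : ℝ)*a^8*s^3 + (-64144/243 : ℝ)*a^8*s^3*t + (2680/243 : ℝ)*a^8*s^3*t^2 + (10480/729 : ℝ)*a^8*s^3*t^3 + (-7600/2187 : ℝ)*a^8*s^3*t^4 + (704/2187 : ℝ)*a^8*s^3*t^5 + (-8/729 : ℝ)*a^8*s^3*t^6 + (10736/81 : ℝ)*a^8*s^5 + (-21760/243 : ℝ)*a^8*s^5*t + (17500/729 : ℝ)*a^8*s^5*t^2 + (-6980/2187 : ℝ)*a^8*s^5*t^3 + (460/2187 : ℝ)*a^8*s^5*t^4 + (-4/729 : ℝ)*a^8*s^5*t^5) * hs2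
        + ((-18752/81 : ℝ)*a^8*s + (-13888/243 : ℝ)*a^8*s*t + (16864/729 : ℝ)*a^8*s*t^2 + (4736/243 : ℝ)*a^8*s*t^3 + (-17536/2187 : ℝ)*a^8*s*t^4 + (2240/2187 : ℝ)*a^8*s*t^5 + (-32/729 : ℝ)*a^8*s*t^6) * ht2
  have h3c : (2 * a + (-(a / 3) * s)) ^ 3 ≠ 0 := by positivity
  have h4c : (2 * a - (-(a / 3) * s)) ^ 3 ≠ 0 := by positivity
  calc ((2 * a + (a / 3) * (6 - t) * s) / (2 * a + (-(a / 3) * s))) ^ 3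
        * (8 * a + 5 * (-(a / 3) * s) - (a / 3) * (6 - t) * s) ^ 2
      = (2 * a + (a / 3) * (6 - t) * s) ^ 3 * (8 * a + 5 * (-(a / 3) * s) - (a / 3) * (6 - t) * s) ^ 2
          / (2 * a + (-(a / 3) * s)) ^ 3 := by rw [div_pow]; ring
    _ = (2 * a - (a / 3) * (6 - t) * s) ^ 3 * (8 * a - 5 * (-(a / 3) * s) + (a / 3) * (6 - t) * s) ^ 2
          / (2 * a - (-(a / 3) * s)) ^ 3 := by rw [div_eq_div_iff h3c h4c]; linear_combination hkey
    _ = ((2 * a - (a / 3) * (6 - t) * s) / (2 * a - (-(a / 3) * s))) ^ 3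
          * (8 * a - 5 * (-(a / 3) * s) + (a / 3) * (6 - t) * s) ^ 2 := by rw [div_pow]; ring

/-- Breaking Riemann invariants for dispersionless cubic defocusing NLS with
`u₀(x) = a² sech² x`: at `r₊ = (a/3)(6−√33)s`, `r₋ = −(a/3)s` with `s = √(2√33+6)`,
the quantities `2a ± r_±` are positive and the algebraic breaking equation holds. -/
theorem stmt17 (a : ℝ) (ha : 0 < a) :
    let s := Real.sqrt (2 * Real.sqrt 33 + 6)
    let rp := (a / 3) * (6 - Real.sqrt 33) * s
    let rm := -(a / 3) * s
    0 < 2 * a + rp ∧ 0 < 2 * a - rp ∧ 0 < 2 * a + rm ∧ 0 < 2 * a - rm ∧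
    ((2 * a + rp) / (2 * a + rm)) ^ ((3 : ℝ) / 2) * (8 * a + 5 * rm - rp)
      = ((2 * a - rp) / (2 * a - rm)) ^ ((3 : ℝ) / 2) * (8 * a - 5 * rm + rp) := by
  intro s rp rm
  have ht0 : (0:ℝ) ≤ Real.sqrt 33 := Real.sqrt_nonneg _
  have ht2 : Real.sqrt 33 ^ 2 = 33 := Real.sq_sqrt (by norm_num)
  have hs2 : s ^ 2 = 2 * Real.sqrt 33 + 6 := Real.sq_sqrt (by positivity)
  exact stmt17_aux a s (Real.sqrt 33) ha ht2 ht0 hs2 (Real.sqrt_nonneg _)
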